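/- Suppose the random variable X satisfies E[X_+^p] < ∞ for some p > 1, and let μ solve μ'(t) = λφ(μ(t)), μ(0) = μ₀ with μ₀ ≥ 0, where φ(x) = E[(X−x)_+]. Then for all t ≥ 0, μ(t) ≤ μ₀ + (E[(X−μ₀)_+^p])^{1/p}·(λt)^{1/p}. -/

import Mathlib

open MeasureTheory Set Filter

/-- Pointwise key inequality: `p * s^(p-1) * (a - s)₊ ≤ a^p` for `s, a ≥ 0`, `p > 1`. -/
lemma stmt12_key_pt {p : ℝ} (hp : 1 < p) {s a : ℝ} (hs : 0 ≤ s) (ha : 0 ≤ a) :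
    p * s ^ (p - 1) * max (a - s) 0 ≤ a ^ p := by
  rcases le_or_gt a s with h | h
  · rw [max_eq_right (by linarith)]
    simpa using Real.rpow_nonneg ha p
  · rw [max_eq_left (by linarith)]
    rcases eq_or_lt_of_le hs with rfl | hs'
    · rw [Real.zero_rpow (by linarith : p - 1 ≠ 0)]
      simpa using Real.rpow_nonneg ha p
    · have h1 : (-1 : ℝ) ≤ (a - s) / s :=
        le_trans (by norm_num : (-1:ℝ) ≤ 0) (div_nonneg (by linarith) hs'.le)
      have h2 := one_add_mul_self_le_rpow_one_add h1 hp.le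
      have he : (1 : ℝ) + (a - s) / s = a / s := by field_simp; ring
      rw [he] at h2
      have hsp : (0 : ℝ) < s ^ p := Real.rpow_pos_of_pos hs' p
      have h3 : (1 + p * ((a - s) / s)) * s ^ p ≤ (a / s) ^ p * s ^ p :=
        mul_le_mul_of_nonneg_right h2 hsp.le
      have e1 : (a / s) ^ p * s ^ p = a ^ p := by
        rw [Real.div_rpow ha hs'.le, div_mul_cancel₀ _ hsp.ne']
      have e2 : s ^ (p - 1) * s = s ^ p := by
        calc s ^ (p - 1) * s = s ^ (p - 1) * s ^ (1 : ℝ) := by rw [Real.rpow_one]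
          _ = s ^ (p - 1 + 1) := (Real.rpow_add hs' _ _).symm
          _ = s ^ p := by rw [sub_add_cancel]
      rw [e1] at h3
      have e3 : (a - s) / s * s = a - s := div_mul_cancel₀ _ hs'.ne'
      have e4 : (a - s) / s * s ^ p = s ^ (p - 1) * (a - s) := by
        rw [← e2, show (a - s) / s * (s ^ (p - 1) * s) = s ^ (p - 1) * ((a - s) / s * s) from by
          ring, e3]
      have e5 : p * ((a - s) / s) * s ^ p = p * (s ^ (p - 1) * (a - s)) := by
        rw [mul_assoc, e4]
      nlinarith [h3, e5, hsp.le]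

/-- if E[X_+^p] < ∞ (p > 1) and μ solves μ' = λφ(μ), μ(0) = μ₀ with
φ(x) = E[(X−x)_+], then μ(t) ≤ μ₀ + (E[(X−μ₀)_+^p])^{1/p}·(λt)^{1/p} for all t ≥ 0. -/
theorem stmt12 {Ω : Type*} [MeasurableSpace Ω] (P : Measure Ω) [IsProbabilityMeasure P]
    (X : Ω → ℝ) (hX : Measurable X) (p : ℝ) (hp : 1 < p)
    (hint : Integrable (fun ω => (max (X ω) 0) ^ p) P)
    (φ : ℝ → ℝ) (hφ : ∀ x, φ x = ∫ ω, max (X ω - x) 0 ∂P)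
    (lam μ₀ : ℝ) (hlam : 0 < lam) (hμ₀ : 0 ≤ μ₀)
    (hμ₀M : 0 < P {ω | μ₀ < X ω})
    (μ : ℝ → ℝ) (hinit : μ 0 = μ₀)
    (hode : ∀ t : ℝ, 0 ≤ t → HasDerivAt μ (lam * φ (μ t)) t) :
    ∀ t : ℝ, 0 ≤ t →
      μ t ≤ μ₀ + (∫ ω, (max (X ω - μ₀) 0) ^ p ∂P) ^ (1 / p) * (lam * t) ^ (1 / p) := by
  have hp0 : (0 : ℝ) < p := by linarith
  set Cp : ℝ := ∫ ω, (max (X ω - μ₀) 0) ^ p ∂P with hCp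
  have hCpnn : 0 ≤ Cp :=
    integral_nonneg fun ω => Real.rpow_nonneg (le_max_right _ _) _
  -- integrability of (X - μ₀)₊^p
  have hCp_int : Integrable (fun ω => (max (X ω - μ₀) 0) ^ p) P := by
    refine hint.mono ?_ ?_
    · exact ((Real.continuous_rpow_const hp0.le).measurable.comp
        ((hX.sub measurable_const).max measurable_const)).aestronglyMeasurable
    · filter_upwards with ω
      have h1 : 0 ≤ max (X ω - μ₀) 0 := le_max_right _ _
      have h2 : max (X ω - μ₀) 0 ≤ max (X ω) 0 :=
        max_le_max (by linarith) le_rfl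
      rw [Real.norm_of_nonneg (Real.rpow_nonneg h1 _),
        Real.norm_of_nonneg (Real.rpow_nonneg (le_max_right _ _) _)]
      exact Real.rpow_le_rpow h1 h2 hp0.le
  -- φ is nonnegative
  have hφnn : ∀ x, 0 ≤ φ x := by
    intro x
    rw [hφ x]
    exact integral_nonneg fun ω => le_max_right _ _
  -- μ is monotone on [0, ∞)
  have hmono : MonotoneOn μ (Ici (0 : ℝ)) := by
    apply monotoneOn_of_deriv_nonneg (convex_Ici 0)
    · exact fun t ht => (hode t ht).continuousAt.continuousWithinAt
    · intro t ht
      rw [interior_Ici] at ht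
      exact ((hode t (le_of_lt ht)).differentiableAt).differentiableWithinAt
    · intro t ht
      rw [interior_Ici] at ht
      rw [(hode t (le_of_lt ht)).deriv]
      exact mul_nonneg hlam.le (hφnn _)
  have hμge : ∀ t, 0 ≤ t → μ₀ ≤ μ t := by
    intro t ht
    have := hmono (self_mem_Ici) (mem_Ici.mpr ht) ht
    rwa [hinit] at this
  -- key integral bound
  have hkey : ∀ t, 0 ≤ t → p * (μ t - μ₀) ^ (p - 1) * φ (μ t) ≤ Cp := by
    intro t ht
    have hs : 0 ≤ μ t - μ₀ := sub_nonneg.mpr (hμge t ht)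
    rw [hφ (μ t), ← integral_const_mul]
    refine integral_mono_of_nonneg ?_ hCp_int ?_
    · filter_upwards with ω
      exact mul_nonneg (mul_nonneg hp0.le (Real.rpow_nonneg hs _)) (le_max_right _ _)
    · filter_upwards with ω
      have h2 : max (X ω - μ t) 0 ≤ max (max (X ω - μ₀) 0 - (μ t - μ₀)) 0 := by
        apply max_le_max _ le_rfl
        have : X ω - μ₀ ≤ max (X ω - μ₀) 0 := le_max_left _ _
        linarith
      calc p * (μ t - μ₀) ^ (p - 1) * max (X ω - μ t) 0
          ≤ p * (μ t - μ₀) ^ (p - 1) * max (max (X ω - μ₀) 0 - (μ t - μ₀)) 0 :=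
            mul_le_mul_of_nonneg_left h2
              (mul_nonneg hp0.le (Real.rpow_nonneg hs _))
        _ ≤ (max (X ω - μ₀) 0) ^ p := stmt12_key_pt hp hs (le_max_right _ _)
  -- comparison function
  set h : ℝ → ℝ := fun t => lam * Cp * t - (μ t - μ₀) ^ p with hh
  have hderiv : ∀ t, 0 ≤ t →
      HasDerivAt h (lam * Cp - lam * φ (μ t) * p * (μ t - μ₀) ^ (p - 1)) t := by
    intro t ht
    have h1 : HasDerivAt (fun t : ℝ => lam * Cp * t) (lam * Cp) t := by
      simpa using (hasDerivAt_id t).const_mul (lam * Cp)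
    have h2 : HasDerivAt (fun t => (μ t - μ₀) ^ p)
        (lam * φ (μ t) * p * (μ t - μ₀) ^ (p - 1)) t :=
      ((hode t ht).sub_const μ₀).rpow_const (Or.inr hp.le)
    exact h1.sub h2
  have hhmono : MonotoneOn h (Ici (0 : ℝ)) := by
    apply monotoneOn_of_deriv_nonneg (convex_Ici 0)
    · exact fun t ht => (hderiv t ht).continuousAt.continuousWithinAt
    · intro t ht
      rw [interior_Ici] at ht
      exact ((hderiv t (le_of_lt ht)).differentiableAt).differentiableWithinAt
    · intro t ht
      rw [interior_Ici] at ht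
      rw [(hderiv t (le_of_lt ht)).deriv]
      have := hkey t (le_of_lt ht)
      have h3 : lam * φ (μ t) * p * (μ t - μ₀) ^ (p - 1)
          = lam * (p * (μ t - μ₀) ^ (p - 1) * φ (μ t)) := by ring
      rw [h3]
      have := mul_le_mul_of_nonneg_left (hkey t (le_of_lt ht)) hlam.le
      linarith
  -- conclude the power bound
  intro t ht
  have hbound : (μ t - μ₀) ^ p ≤ lam * Cp * t := by
    have h0 : h 0 ≤ h t := hhmono self_mem_Ici (mem_Ici.mpr ht) ht
    have hh0 : h 0 = 0 := by
      simp [hh, hinit, Real.zero_rpow hp0.ne']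
    rw [hh0] at h0
    simp only [hh] at h0
    linarith
  have hs : 0 ≤ μ t - μ₀ := sub_nonneg.mpr (hμge t ht)
  have hfin : μ t - μ₀ ≤ (lam * Cp * t) ^ (1 / p) := by
    have := Real.rpow_le_rpow (Real.rpow_nonneg hs p) hbound (by positivity : (0:ℝ) ≤ 1 / p)
    rwa [← Real.rpow_mul hs, mul_one_div_cancel hp0.ne', Real.rpow_one] at this
  have heq : (lam * Cp * t) ^ (1 / p) = Cp ^ (1 / p) * (lam * t) ^ (1 / p) := by
    rw [show lam * Cp * t = Cp * (lam * t) by ring,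
      Real.mul_rpow hCpnn (mul_nonneg hlam.le ht)]
  rw [heq] at hfin
  linarith
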